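/- Let A be a filter space that is not finitely generated. Then there exists a filter space Y whose underlying set has the same cardinality as that of A and such that CH({Y}) = SCH({A}), i.e., the coreflective hull of Y equals the class of all subspaces of spaces belonging to the coreflective hull of A. -/

import Mathlib

universe u v

/-- A class of topological spaces (in universe `u`): a predicate on spaces. -/
abbrev TopClass : Type (u + 1) := (X : Type u) → TopologicalSpace X → Prop

/-- A class of topological spaces is coreflective if it is closed under the formation of
topological sums and quotient spaces. -/
def IsCoreflective (C : TopClass.{u}) : Prop :=
  (∀ (ι : Type u) (X : ι → Type u) (t : (i : ι) → TopologicalSpace (X i)),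
      (∀ i, C (X i) (t i)) → C ((i : ι) × X i) (@instTopologicalSpaceSigma ι X t)) ∧
  (∀ (X Y : Type u) (tX : TopologicalSpace X) (tY : TopologicalSpace Y) (f : X → Y),
      @Topology.IsQuotientMap X Y tX tY f → C X tX → C Y tY)

/-- The coreflective hull of a class of spaces: the smallest coreflective class containing it. -/
def CH (A : TopClass.{u}) : TopClass.{u} :=
  fun X tX => ∀ C : TopClass.{u}, IsCoreflective C → (∀ Y tY, A Y tY → C Y tY) → C X tX

/-- `SCH A` is the class of all subspaces of members of `CH A`. -/
def SCH (A : TopClass.{u}) : TopClass.{u} :=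
  fun X tX => ∃ (Y : Type u) (tY : TopologicalSpace Y) (f : X → Y),
    CH A Y tY ∧ @Topology.IsEmbedding X Y tX tY f

/-- The class consisting of (the spaces homeomorphic to) a single space `A`. -/
def singleClass (A : Type u) (tA : TopologicalSpace A) : TopClass.{u} :=
  fun Y tY => Nonempty (@Homeomorph Y A tY tA)

/-- A class of topological spaces is hereditary if it is closed under subspaces. -/
def IsHereditary (C : TopClass.{u}) : Prop :=
  ∀ (X : Type u) (tX : TopologicalSpace X), C X tX →
    ∀ (Z : Type u) (tZ : TopologicalSpace Z) (f : Z → X), @Topology.IsEmbedding Z X tZ tX f →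
      C Z tZ

/-- The class `FG` of finitely generated (Alexandrov-discrete) topological spaces. -/
def FGClass : TopClass.{u} := fun X tX => @AlexandrovDiscrete X tX

/-- A filter space: a topological space with precisely one accumulation (non-isolated) point,
namely `a`. -/
def IsFilterSpace (X : Type u) [TopologicalSpace X] (a : X) : Prop :=
  ¬ IsOpen ({a} : Set X) ∧ ∀ x : X, x ≠ a → IsOpen ({x} : Set X)

/-- A filter subspace of a filter space `A` with accumulation point `a`: a subset containing `a`
such that `a` is in the closure of `B \ {a}`. -/
def IsFilterSubspace (A : Type u) [TopologicalSpace A] (a : A) (B : Set A) : Prop :=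
  a ∈ B ∧ a ∈ closure (B \ {a})

namespace Stmt8Aux

open Topology Set

variable {A : Type u}

/-- `X` is presented as a quotient of a sum of copies of `Z` via the family `g`. -/
def QuotFam (Z : Type u) (tZ : TopologicalSpace Z) (X : Type u) (tX : TopologicalSpace X) : Prop :=
  ∃ (I : Type u) (g : I → Z → X), (∀ x, ∃ i z, g i z = x) ∧
    ∀ U : Set X, IsOpen[tX] U ↔ ∀ i, IsOpen[tZ] (g i ⁻¹' U)

theorem isCoreflective_quotFam (Z : Type u) (tZ : TopologicalSpace Z) :
    IsCoreflective (fun X tX => QuotFam Z tZ X tX) := by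
  constructor
  · intro ι Xf tf h
    choose I g hsurj hiff using h
    refine ⟨(i : ι) × I i, fun p z => ⟨p.1, g p.1 p.2 z⟩, ?_, ?_⟩
    · rintro ⟨i, x⟩
      obtain ⟨k, z, hz⟩ := hsurj i x
      exact ⟨⟨i, k⟩, z, by simp [hz]⟩
    · intro U
      letI := tf
      rw [isOpen_sigma_iff]
      constructor
      · intro h ⟨i, k⟩
        have := (hiff i (Sigma.mk i ⁻¹' U)).mp (h i) k
        exact this
      · intro h i
        exact (hiff i (Sigma.mk i ⁻¹' U)).mpr (fun k => h ⟨i, k⟩)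
  · intro X X' tX tX' f hq hQ
    obtain ⟨I, g, hsurj, hiff⟩ := hQ
    refine ⟨I, fun i z => f (g i z), ?_, ?_⟩
    · intro x'
      obtain ⟨x, rfl⟩ := hq.surjective x'
      obtain ⟨i, z, rfl⟩ := hsurj x
      exact ⟨i, z, rfl⟩
    · intro U
      rw [← hq.isOpen_preimage]
      exact hiff (f ⁻¹' U)

theorem ch_iff_quotFam (Z : Type u) (tZ : TopologicalSpace Z)
    (X : Type u) (tX : TopologicalSpace X) :
    CH (singleClass Z tZ) X tX ↔ QuotFam Z tZ X tX := by
  constructor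
  · intro h
    refine h _ (isCoreflective_quotFam Z tZ) ?_
    rintro Y tY ⟨e⟩
    refine ⟨PUnit, fun _ => e.symm, fun y => ⟨⟨⟩, e y, e.symm_apply_apply y⟩, fun U => ?_⟩
    constructor
    · intro hU _
      exact e.symm.continuous.isOpen_preimage U hU
    · intro h
      have := h ⟨⟩
      have h2 : IsOpen (e.symm.symm ⁻¹' (e.symm ⁻¹' U)) := e.symm.symm.continuous.isOpen_preimage _ this
      simpa [Set.preimage_preimage] using h2
  · rintro ⟨I, g, hsurj, hiff⟩ C hC hsub
    have hZ : C Z tZ := hsub Z tZ ⟨Homeomorph.refl Z⟩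
    have hsig : C ((i : I) × Z) (@instTopologicalSpaceSigma I (fun _ => Z) (fun _ => tZ)) :=
      hC.1 I (fun _ => Z) (fun _ => tZ) (fun _ => hZ)
    refine hC.2 _ _ _ _ (fun p => g p.1 p.2) ?_ hsig
    rw [Topology.isQuotientMap_iff, and_comm, isCoinducing_iff]
    constructor
    · intro x; obtain ⟨i, z, hz⟩ := hsurj x; exact ⟨⟨i, z⟩, hz⟩
    · intro U
      rw [hiff U, isOpen_sigma_iff]
      exact Iff.rfl


section Pres
variable [tA : TopologicalSpace A] (a : A)

/-- Opens of a filter space. -/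
theorem isOpen_filterSpace_iff (hA : IsFilterSpace A a) (U : Set A) :
    IsOpen U ↔ (a ∈ U → U ∈ 𝓝 a) := by
  constructor
  · exact fun hU ha => hU.mem_nhds ha
  · intro h
    by_cases ha : a ∈ U
    · have hU : U = interior U ∪ ⋃ (x : A) (_ : x ∈ U ∧ x ≠ a), {x} := by
        apply Subset.antisymm
        · intro x hx
          by_cases hxa : x = a
          · subst hxa
            exact Or.inl (mem_interior_iff_mem_nhds.2 (h ha))
          · exact Or.inr (by simp [hx, hxa])
        · intro x hx
          rcases hx with hx | hx
          · exact interior_subset hx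
          · simp only [mem_iUnion] at hx
            obtain ⟨y, ⟨hy, _⟩, hxy⟩ := hx
            simp only [mem_singleton_iff] at hxy
            exact hxy ▸ hy
      rw [hU]
      exact isOpen_interior.union (isOpen_biUnion (fun x hx => hA.2 x hx.2))
    · have hU : U = ⋃ (x : A) (_ : x ∈ U), {x} := by
        ext y; simp
      rw [hU]
      refine isOpen_biUnion (fun x hx => hA.2 x ?_)
      rintro rfl; exact ha hx

/-- The topology on `X` presented by a family of maps from the filter space `A`,
the map `q j` being a copy of `A` whose accumulation point is sent to `q j a`. -/
def presTop {X : Type u} {J : Type u} (q : J → A → X) : TopologicalSpace X where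
  IsOpen U := ∀ j, q j a ∈ U → q j ⁻¹' U ∈ 𝓝 a
  isOpen_univ := by intro j _; simp
  isOpen_inter := by
    intro U V hU hV j hj
    rw [Set.preimage_inter]
    exact Filter.inter_mem (hU j hj.1) (hV j hj.2)
  isOpen_sUnion := by
    intro S hS j hj
    obtain ⟨U, hUS, hjU⟩ := hj
    exact Filter.mem_of_superset (hS U hUS j hjU) (Set.preimage_mono (subset_sUnion_of_mem hUS))

theorem presTop_isOpen_iff {X : Type u} {J : Type u} (q : J → A → X) (U : Set X) :
    IsOpen[presTop a q] U ↔ ∀ j, q j a ∈ U → q j ⁻¹' U ∈ 𝓝 a := Iff.rfl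

theorem quotFam_presTop {X : Type u} {J : Type u} (hA : IsFilterSpace A a) (q : J → A → X)
    (hsurj : ∀ x, ∃ j z, q j z = x) : QuotFam A tA X (presTop a q) := by
  refine ⟨J, q, hsurj, fun U => ?_⟩
  rw [presTop_isOpen_iff]
  constructor
  · intro h j
    rw [isOpen_filterSpace_iff a hA]
    exact h j
  · intro h j
    exact (isOpen_filterSpace_iff a hA _).1 (h j)

theorem quotFam_to_presTop {X : Type u} {tX : TopologicalSpace X} (hA : IsFilterSpace A a)
    (h : QuotFam A tA X tX) :
    ∃ (J : Type u) (q : J → A → X), (∀ x, ∃ j z, q j z = x) ∧ tX = presTop a q := by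
  obtain ⟨I, g, hsurj, hiff⟩ := h
  refine ⟨I, g, hsurj, ?_⟩
  apply TopologicalSpace.ext_iff.2
  intro U
  rw [hiff U, presTop_isOpen_iff]
  constructor
  · intro h j
    exact (isOpen_filterSpace_iff a hA _).1 (h j)
  · intro h j
    rw [isOpen_filterSpace_iff a hA]
    exact h j

end Pres

/-- A "prime" topology: every point other than `b` is isolated and the
open neighbourhoods of `b` are the members of `𝔉` containing `b`. -/
def primeTop {P : Type u} (b : P) (𝔉 : Filter P) : TopologicalSpace P where
  IsOpen U := b ∈ U → U ∈ 𝔉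
  isOpen_univ := fun _ => Filter.univ_mem
  isOpen_inter := fun U V hU hV h => Filter.inter_mem (hU h.1) (hV h.2)
  isOpen_sUnion := by
    intro S hS h
    obtain ⟨U, hUS, hU⟩ := h
    exact Filter.mem_of_superset (hS U hUS hU) (subset_sUnion_of_mem hUS)

theorem primeTop_isOpen_iff {P : Type u} (b : P) (𝔉 : Filter P) (U : Set P) :
    IsOpen[primeTop b 𝔉] U ↔ (b ∈ U → U ∈ 𝔉) := Iff.rfl


/-- The non-accumulation points of the filter space `A`. -/
def Mt (a : A) : Type u := {z : A // z ≠ a}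

open scoped Classical in
/-- The presentation maps of the tree space: the node `s` carries a copy of `A` anchored
at `s` whose isolated points enumerate the children of `s`. -/
noncomputable def gT (a : A) (s : List (Mt a)) (z : A) : List (Mt a) :=
  if h : z = a then s else ⟨z, h⟩ :: s

theorem gT_a (a : A) (s : List (Mt a)) : gT a s a = s := dif_pos rfl

theorem gT_ne (a : A) (s : List (Mt a)) {z : A} (hz : z ≠ a) : gT a s z = ⟨z, hz⟩ :: s :=
  dif_neg hz

section Tree
variable [tA : TopologicalSpace A] (a : A)

/-- The tree space. -/
noncomputable def tT : TopologicalSpace (List (Mt a)) := presTop a (gT a)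

/-- The neighbourhood filter of the root of the tree space. -/
noncomputable def EY : Filter (List (Mt a)) := @nhds _ (tT a) []

/-- The generating prime space `Y`: the prime factor of the tree space at its root. -/
noncomputable def tY : TopologicalSpace (List (Mt a)) := primeTop [] (EY a)

theorem isOpen_tY_iff (U : Set (List (Mt a))) :
    IsOpen[tY a] U ↔ ([] ∈ U → U ∈ EY a) := Iff.rfl

theorem EY_mem_iff (U : Set (List (Mt a))) :
    U ∈ EY a ↔ ∃ W, W ⊆ U ∧ IsOpen[tT a] W ∧ [] ∈ W := by
  letI := tT a
  exact mem_nhds_iff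

theorem isOpen_tT_mem_EY {W : Set (List (Mt a))} (hW : IsOpen[tT a] W) (hmem : [] ∈ W) :
    W ∈ EY a := (EY_mem_iff a W).2 ⟨W, Subset.rfl, hW, hmem⟩

theorem singleton_nil_not_mem_EY (hA : IsFilterSpace A a) :
    ({([] : List (Mt a))} : Set (List (Mt a))) ∉ EY a := by
  intro h
  obtain ⟨W, hWsub, hWopen, hWmem⟩ := (EY_mem_iff a _).1 h
  have hWeq : W = {([] : List (Mt a))} := Subset.antisymm hWsub (by simpa using hWmem)
  subst hWeq
  have h2 := (presTop_isOpen_iff a (gT a) _).1 hWopen [] (by simp [gT_a])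
  have h3 : gT a [] ⁻¹' {([] : List (Mt a))} = {a} := by
    ext z
    by_cases hz : z = a
    · simp [hz, gT_a]
    · simp [gT_ne a [] hz, hz]
  rw [h3] at h2
  obtain ⟨V, hVsub, hVopen, hVmem⟩ := mem_nhds_iff.1 h2
  have : V = {a} := Subset.antisymm hVsub (by simpa using hVmem)
  exact hA.1 (this ▸ hVopen)

theorem isFilterSpace_Y (hA : IsFilterSpace A a) :
    @IsFilterSpace (List (Mt a)) (tY a) [] := by
  constructor
  · intro h
    exact singleton_nil_not_mem_EY a hA (((isOpen_tY_iff a _).1 h) rfl)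
  · intro s hs
    rw [isOpen_tY_iff]
    intro h
    simp only [mem_singleton_iff] at h
    exact absurd h.symm hs

theorem card_Y (hfg : ¬ AlexandrovDiscrete A) :
    Cardinal.mk (List (Mt a)) = Cardinal.mk A := by
  have hinf : Infinite A := by
    rw [← not_finite_iff_infinite]
    intro hfin
    exact hfg ⟨fun S hS => (Set.toFinite S).isOpen_sInter hS⟩
  have h1 : Cardinal.mk (Mt a) = Cardinal.mk A := by
    have h2 : Cardinal.mk ↥({a}ᶜ : Set A) = Cardinal.mk A := by
      apply Cardinal.mk_compl_of_infinite
      rw [Cardinal.mk_singleton]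
      exact Cardinal.one_lt_aleph0.trans_le (Cardinal.aleph0_le_mk A)
    rw [← h2]
    exact Cardinal.mk_congr (Equiv.subtypeEquivRight (fun z => by simp [Mt])).symm
  haveI : Infinite (Mt a) := by
    rw [Cardinal.infinite_iff] at hinf ⊢
    rwa [h1]
  rw [Cardinal.mk_list_eq_mk, h1]

end Tree

section Escape

variable [tA : TopologicalSpace A] (a : A) {X : Type u} {J : Type u}
variable (q : J → A → X) (V : Set X)

/-- One step of the escape operator. -/
def escStep (Z : Set X) : Set X :=
  {y | y ∉ V ∨ ∃ j, q j a = y ∧ ∀ C ∈ 𝓝 a, ∃ z ∈ C, z ≠ a ∧ q j z ∈ Z}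

/-- Ordinal-indexed stages of the escape set. -/
noncomputable def escStage : Ordinal.{u} → Set X :=
  Ordinal.lt_wf.fix fun α ih => escStep a q V (⋃ β : {β : Ordinal.{u} // β < α}, ih β.1 β.2)

theorem escStage_eq (α : Ordinal.{u}) :
    escStage a q V α = escStep a q V (⋃ β : {β : Ordinal.{u} // β < α}, escStage a q V β.1) := by
  rw [escStage, WellFounded.fix_eq]

/-- The escape set. -/
def escU : Set X := {y | ∃ α : Ordinal.{u}, y ∈ escStage a q V α}

/-- Escape rank. -/
noncomputable def escRk (y : X) : Ordinal.{u} := sInf {α | y ∈ escStage a q V α}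

theorem mem_escStage_escRk {y : X} (hy : y ∈ escU a q V) :
    y ∈ escStage a q V (escRk a q V y) := csInf_mem hy

theorem escRk_le {y : X} {α : Ordinal.{u}} (h : y ∈ escStage a q V α) : escRk a q V y ≤ α :=
  csInf_le' h

theorem mem_escU_of_not_mem (hy : y ∉ V) : y ∈ escU a q V :=
  ⟨0, by rw [escStage_eq]; exact Or.inl hy⟩

theorem escU_closed {y : X}
    (h : y ∈ escStep a q V (escU a q V)) : y ∈ escU a q V := by
  rcases h with h | ⟨j, hj, hpos⟩
  · exact mem_escU_of_not_mem a q V h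
  · set α : Ordinal.{u} := (⨆ w : escU a q V, escRk a q V w.1) + 1 with hα
    refine ⟨α, ?_⟩
    rw [escStage_eq]
    refine Or.inr ⟨j, hj, fun C hC => ?_⟩
    obtain ⟨z, hzC, hza, hzZ⟩ := hpos C hC
    refine ⟨z, hzC, hza, ?_⟩
    have hrk : escRk a q V (q j z) < α := by
      have h1 : escRk a q V (q j z) ≤ ⨆ w : escU a q V, escRk a q V w.1 :=
        le_ciSup (Ordinal.bddAbove_range _) (⟨q j z, hzZ⟩ : escU a q V)
      rw [hα]
      exact h1.trans_lt (Order.lt_succ _)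
    exact mem_iUnion.2 ⟨⟨_, hrk⟩, mem_escStage_escRk a q V hzZ⟩

theorem isOpen_escU_compl : IsOpen[presTop a q] (escU a q V)ᶜ := by
  rw [presTop_isOpen_iff]
  intro j hj
  by_cases hV : q j a ∈ V
  · have hstep : q j a ∉ escStep a q V (escU a q V) := fun h => hj (escU_closed a q V h)
    rw [escStep, mem_setOf_eq] at hstep
    push_neg at hstep
    obtain ⟨C, hC, hCprop⟩ := hstep.2 j rfl
    refine Filter.mem_of_superset hC ?_
    intro z hz
    by_cases hza : z = a
    · subst hza; exact hj
    · exact fun hmem => (hCprop z hz hza) hmem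
  · exact absurd (mem_escU_of_not_mem a q V hV) hj

/-- Canonical escaping constraint: exists when `y ∈ escU ∩ V`. -/
theorem exists_escSel {y : X} (h1 : y ∈ escU a q V) (h2 : y ∈ V) :
    ∃ j, q j a = y ∧ ∀ C ∈ 𝓝 a, ∃ z ∈ C, z ≠ a ∧
      (q j z ∈ escU a q V ∧ escRk a q V (q j z) < escRk a q V y) := by
  have hmem := mem_escStage_escRk a q V h1
  rw [escStage_eq] at hmem
  rcases hmem with hmem | ⟨j, hj, hpos⟩
  · exact absurd h2 hmem
  · refine ⟨j, hj, fun C hC => ?_⟩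
    obtain ⟨z, hzC, hza, hzZ⟩ := hpos C hC
    obtain ⟨⟨β, hβ⟩, hmemβ⟩ := mem_iUnion.1 hzZ
    exact ⟨z, hzC, hza, ⟨β, hmemβ⟩, (escRk_le a q V hmemβ).trans_lt hβ⟩

open scoped Classical in
/-- One step of the escaping path map. -/
noncomputable def escNext (y : X) (m : Mt a) : X :=
  if h : y ∈ escU a q V ∧ y ∈ V then q (exists_escSel a q V h.1 h.2).choose m.1 else y

/-- The escaping path map on the tree. -/
noncomputable def escPhi (x₀ : X) (s : List (Mt a)) : X :=
  s.foldr (fun m y => escNext a q V y m) x₀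

theorem escPhi_nil (x₀ : X) : escPhi a q V x₀ [] = x₀ := rfl

theorem escPhi_cons (x₀ : X) (m : Mt a) (s : List (Mt a)) :
    escPhi a q V x₀ (m :: s) = escNext a q V (escPhi a q V x₀ s) m := rfl

theorem escPhi_continuous (x₀ : X) (U : Set X) (hU : IsOpen[presTop a q] U) :
    IsOpen[tT a] (escPhi a q V x₀ ⁻¹' U) := by
  rw [tT, presTop_isOpen_iff]
  intro s hs
  rw [gT_a] at hs
  by_cases h : escPhi a q V x₀ s ∈ escU a q V ∧ escPhi a q V x₀ s ∈ V
  · have hsel := (exists_escSel a q V h.1 h.2).choose_spec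
    set j₀ := (exists_escSel a q V h.1 h.2).choose
    have hanch : q j₀ a ∈ U := by rw [hsel.1]; exact hs
    have hpre : q j₀ ⁻¹' U ∈ 𝓝 a := hU j₀ hanch
    refine Filter.mem_of_superset hpre ?_
    intro z hz
    by_cases hza : z = a
    · subst hza
      simp only [mem_preimage, gT_a]
      exact hs
    · rw [mem_preimage, gT_ne a s hza, mem_preimage, escPhi_cons a q V x₀ ⟨z, hza⟩ s]
      unfold escNext
      rw [dif_pos h]
      exact hz
  · refine Filter.mem_of_superset Filter.univ_mem ?_
    intro z _
    by_cases hza : z = a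
    · subst hza
      simp only [mem_preimage, gT_a]
      exact hs
    · rw [mem_preimage, gT_ne a s hza, mem_preimage, escPhi_cons a q V x₀ ⟨z, hza⟩ s]
      unfold escNext
      rw [dif_neg h]
      exact hs

theorem escPhi_escape (x₀ : X) :
    ∀ (α : Ordinal.{u}) (y : X), y ∈ escU a q V → escRk a q V y = α →
      ∀ s : List (Mt a), escPhi a q V x₀ s = y →
      ∀ W : Set (List (Mt a)), IsOpen[tT a] W → s ∈ W →
      ∃ s' ∈ W, escPhi a q V x₀ s' ∉ V := by
  intro α
  induction α using Ordinal.induction with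
  | h α IH =>
    intro y hy hrk s hsy W hW hsW
    subst hsy
    by_cases hyV : escPhi a q V x₀ s ∈ V
    · have h : escPhi a q V x₀ s ∈ escU a q V ∧ escPhi a q V x₀ s ∈ V := ⟨hy, hyV⟩
      have hsel := (exists_escSel a q V h.1 h.2).choose_spec
      set j₀ := (exists_escSel a q V h.1 h.2).choose
      -- the children of s in W form a neighbourhood of a
      have hC : gT a s ⁻¹' W ∈ 𝓝 a := by
        have := (presTop_isOpen_iff a (gT a) W).1 hW s
        rw [gT_a] at this
        exact this hsW
      obtain ⟨z, hzC, hza, hzesc, hzrk⟩ := hsel.2 _ hC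
      have hchild : escPhi a q V x₀ (⟨z, hza⟩ :: s) = q j₀ z := by
        rw [escPhi_cons a q V x₀ ⟨z, hza⟩ s]
        unfold escNext
        rw [dif_pos h]
      have hzrk' : escRk a q V (q j₀ z) < α := hrk ▸ hzrk
      have hmemW : (⟨z, hza⟩ :: s) ∈ W := by
        have : gT a s z ∈ W := hzC
        rwa [gT_ne a s hza] at this
      exact IH _ hzrk' (q j₀ z) hzesc rfl _ hchild W hW hmemW
    · exact ⟨s, hsW, hyV⟩

end Escape

section Dir2

variable [tA : TopologicalSpace A] (a : A)

open scoped Classical in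
/-- The collapse of an escaping path map to the subspace. -/
noncomputable def subMap {X Ym : Type u} {J : Type u} (q : J → A → Ym) (e : X → Ym)
    (x₀ : X) (V : Set Ym) (s : List (Mt a)) : X :=
  if h : ∃ x', e x' = escPhi a q V (e x₀) s ∧ x' ≠ x₀ then h.choose else x₀

theorem subMap_nil {X Ym : Type u} {J : Type u} (q : J → A → Ym) {e : X → Ym}
    (he : Function.Injective e) (x₀ : X) (V : Set Ym) : subMap a q e x₀ V [] = x₀ := by
  unfold subMap
  rw [dif_neg]
  rintro ⟨x', hx', hne⟩
  rw [escPhi_nil] at hx'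
  exact hne (he hx')

theorem quotFam_Y_of_subspace {X : Type u} {tX : TopologicalSpace X} {Ym : Type u}
    {J : Type u} (q : J → A → Ym) (e : X → Ym)
    (hemb : @Topology.IsEmbedding X Ym tX (presTop a q) e) :
    QuotFam (List (Mt a)) (tY a) X tX := by
  classical
  letI tYI : TopologicalSpace Ym := presTop a q
  have hopen_iff : ∀ U : Set X, IsOpen[tX] U ↔
      ∃ Uy : Set Ym, IsOpen Uy ∧ e ⁻¹' Uy = U := by
    intro U
    rw [hemb.toIsInducing.eq_induced]
    exact isOpen_induced_iff
  refine ⟨(X × Set Ym) ⊕ X, fun i =>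
    match i with
    | Sum.inl (x₀, V) => subMap a q e x₀ V
    | Sum.inr x => fun _ => x, fun x => ⟨Sum.inr x, [], rfl⟩, ?_⟩
  intro U
  constructor
  · intro hU i
    rw [isOpen_tY_iff]
    intro hmem
    obtain ⟨Uy, hUy, hUye⟩ := (hopen_iff U).1 hU
    match i with
    | Sum.inr x =>
      have hxU : x ∈ U := hmem
      have : (fun (_ : List (Mt a)) => x) ⁻¹' U = univ := by
        ext s; simp [hxU]
      rw [this]
      exact Filter.univ_mem
    | Sum.inl (x₀, V) =>
      have hmem' : subMap a q e x₀ V [] ∈ U := hmem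
      have hx₀U : x₀ ∈ U := by
        rwa [subMap_nil a q hemb.injective] at hmem'
      show subMap a q e x₀ V ⁻¹' U ∈ EY a
      have hW : IsOpen[tT a] (escPhi a q V (e x₀) ⁻¹' Uy) :=
        escPhi_continuous a q V (e x₀) Uy hUy
      have hWnil : [] ∈ escPhi a q V (e x₀) ⁻¹' Uy := by
        rw [mem_preimage, escPhi_nil]
        rw [← hUye] at hx₀U
        exact hx₀U
      refine Filter.mem_of_superset (isOpen_tT_mem_EY a hW hWnil) ?_
      intro s hs
      rw [mem_preimage] at hs ⊢
      unfold subMap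
      by_cases h : ∃ x', e x' = escPhi a q V (e x₀) s ∧ x' ≠ x₀
      · rw [dif_pos h]
        have := h.choose_spec.1
        rw [← hUye, mem_preimage, this]
        exact hs
      · rw [dif_neg h]
        exact hx₀U
  · intro hall
    rw [hopen_iff]
    have hpt : ∀ x₀ ∈ U, ∃ Uy : Set Ym, IsOpen Uy ∧ e x₀ ∈ Uy ∧ e ⁻¹' Uy ⊆ U := by
      intro x₀ hx₀
      by_contra hno
      push_neg at hno
      set V : Set Ym := e '' U ∪ (range e)ᶜ with hV
      have hbase : ∀ y, y ∉ V → ∃ x', e x' = y ∧ x' ∉ U := by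
        intro y hy
        simp only [hV, mem_union, not_or, mem_compl_iff, not_not] at hy
        obtain ⟨x', hx'⟩ := hy.2
        refine ⟨x', hx', fun hx'U => hy.1 ⟨x', hx'U, hx'⟩⟩
      have hx₀esc : e x₀ ∈ escU a q V := by
        by_contra hesc
        refine hno (escU a q V)ᶜ (isOpen_escU_compl a q V) hesc ?_
        intro x' hx'
        have hx'V : e x' ∈ V := by
          by_contra hx'V
          exact hx' (mem_escU_of_not_mem a q V hx'V)
        rw [hV, mem_union] at hx'V
        rcases hx'V with hx'V | hx'V
        · obtain ⟨x'', hx''U, hx''⟩ := hx'V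
          rwa [← hemb.injective hx'']
        · exact absurd (mem_range_self x') hx'V
      have hi : IsOpen[tY a] (subMap a q e x₀ V ⁻¹' U) := hall (Sum.inl (x₀, V))
      rw [isOpen_tY_iff] at hi
      have hmem : [] ∈ subMap a q e x₀ V ⁻¹' U := by
        rw [mem_preimage, subMap_nil a q hemb.injective]
        exact hx₀
      obtain ⟨W, hWsub, hWopen, hWnil⟩ := (EY_mem_iff a _).1 (hi hmem)
      obtain ⟨s', hs'W, hs'esc⟩ := escPhi_escape a q V (e x₀) (escRk a q V (e x₀)) (e x₀)
        hx₀esc rfl [] (escPhi_nil a q V (e x₀)) W hWopen hWnil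
      obtain ⟨x'', hx''e, hx''U⟩ := hbase _ hs'esc
      have hs'U := hWsub hs'W
      rw [mem_preimage] at hs'U
      unfold subMap at hs'U
      have hne : x'' ≠ x₀ := fun h => hx''U (h ▸ hx₀)
      have hex : ∃ x', e x' = escPhi a q V (e x₀) s' ∧ x' ≠ x₀ := ⟨x'', hx''e, hne⟩
      rw [dif_pos hex] at hs'U
      have : hex.choose = x'' := hemb.injective (hex.choose_spec.1.trans hx''e.symm)
      rw [this] at hs'U
      exact hx''U hs'U
    choose Uy hUyopen hUymem hUysub using hpt
    refine ⟨⋃ (x₀ : X) (h : x₀ ∈ U), Uy x₀ h, ?_, ?_⟩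
    · exact isOpen_iUnion fun x₀ => isOpen_iUnion fun h => hUyopen x₀ h
    · apply Subset.antisymm
      · intro x hx
        rw [mem_preimage, mem_iUnion] at hx
        obtain ⟨x₀, hx₀⟩ := hx
        rw [mem_iUnion] at hx₀
        obtain ⟨h, hmem⟩ := hx₀
        exact hUysub x₀ h hmem
      · intro x hx
        rw [mem_preimage, mem_iUnion]
        exact ⟨x, mem_iUnion.2 ⟨hx, hUymem x hx⟩⟩

theorem sch_to_chY (hA : IsFilterSpace A a) (X : Type u) (tX : TopologicalSpace X)
    (h : SCH (singleClass A tA) X tX) :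
    CH (singleClass (List (Mt a)) (tY a)) X tX := by
  obtain ⟨Ym, tYm, e, hCH, hemb⟩ := h
  obtain ⟨J, q, hsurj, htop⟩ := quotFam_to_presTop a hA ((ch_iff_quotFam A tA Ym tYm).1 hCH)
  subst htop
  rw [ch_iff_quotFam]
  exact quotFam_Y_of_subspace a q e hemb

end Dir2

section Dir1

variable [tA : TopologicalSpace A] (a : A)

variable {X I : Type u}

/-- Anchor of the `s`-node copy in the ambient space. -/
def ambAnchor (p : I → List (Mt a) → X) (i : I) (s : List (Mt a)) :
    X ⊕ (I × List (Mt a)) :=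
  match s with
  | [] => Sum.inl (p i [])
  | (m :: s') => Sum.inr (i, m :: s')

/-- The presentation maps of the ambient space: each node of each copy of the tree carries
two copies of `A`, a "structure" copy (`b = true`) whose isolated points go to fresh shadow
points, and a "trace" copy (`b = false`) whose isolated points land in `X`. -/
noncomputable def ambMap (p : I → List (Mt a) → X) (i : I) (s : List (Mt a)) (b : Bool)
    (z : A) : X ⊕ (I × List (Mt a)) :=
  open scoped Classical in
  if h : z = a then ambAnchor a p i s
  else (if b then Sum.inr (i, ⟨z, h⟩ :: s) else Sum.inl (p i (⟨z, h⟩ :: s)))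

theorem ambMap_a (p : I → List (Mt a) → X) (i : I) (s : List (Mt a)) (b : Bool) :
    ambMap a p i s b a = ambAnchor a p i s := by
  unfold ambMap
  exact dif_pos rfl

theorem ambMap_ne (p : I → List (Mt a) → X) (i : I) (s : List (Mt a)) (b : Bool) {z : A}
    (hz : z ≠ a) : ambMap a p i s b z =
      (if b then Sum.inr (i, ⟨z, hz⟩ :: s) else Sum.inl (p i (⟨z, hz⟩ :: s))) := by
  unfold ambMap
  exact dif_neg hz

/-- The full presentation family of the ambient space (with constant maps added to make the
family surjective). -/
noncomputable def ambPres (p : I → List (Mt a) → X) :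
    ((I × List (Mt a) × Bool) ⊕ (X ⊕ (I × List (Mt a)))) → A → (X ⊕ (I × List (Mt a))) :=
  fun j => match j with
  | Sum.inl t => ambMap a p t.1 t.2.1 t.2.2
  | Sum.inr w => fun _ => w

theorem chA_amb (hA : IsFilterSpace A a) (p : I → List (Mt a) → X) :
    CH (singleClass A tA) (X ⊕ (I × List (Mt a))) (presTop a (ambPres a p)) := by
  rw [ch_iff_quotFam]
  exact quotFam_presTop a hA (ambPres a p) (fun w => ⟨Sum.inr w, a, rfl⟩)

theorem amb_embedding {tX : TopologicalSpace X} (p : I → List (Mt a) → X)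
    (hiff : ∀ U : Set X, IsOpen[tX] U ↔ ∀ i, IsOpen[tY a] (p i ⁻¹' U)) :
    @Topology.IsEmbedding X (X ⊕ (I × List (Mt a))) tX (presTop a (ambPres a p)) Sum.inl := by
  classical
  letI tAmb : TopologicalSpace (X ⊕ (I × List (Mt a))) := presTop a (ambPres a p)
  refine ⟨⟨?_⟩, Sum.inl_injective⟩
  apply TopologicalSpace.ext_iff.2
  intro U
  rw [isOpen_induced_iff]
  constructor
  · intro hU
    have hWex : ∀ i, ∃ Wi, IsOpen[tT a] Wi ∧ Wi ⊆ p i ⁻¹' U ∧ (p i [] ∈ U → [] ∈ Wi) := by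
      intro i
      by_cases hmem : p i [] ∈ U
      · have h1 : IsOpen[tY a] (p i ⁻¹' U) := (hiff U).1 hU i
        rw [isOpen_tY_iff] at h1
        obtain ⟨Wi, hWsub, hWopen, hWnil⟩ := (EY_mem_iff a _).1 (h1 hmem)
        exact ⟨Wi, hWopen, hWsub, fun _ => hWnil⟩
      · exact ⟨∅, @isOpen_empty _ (tT a), empty_subset _, fun h => absurd h hmem⟩
    choose W hWopen hWsub hWnil using hWex
    refine ⟨Sum.inl '' U ∪ {w | ∃ i s, w = Sum.inr (i, s) ∧ s ∈ W i}, ?_, ?_⟩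
    · rw [presTop_isOpen_iff]
      rintro (⟨i, s, bb⟩ | w) hanch
      · have hanch' : ambAnchor a p i s ∈
            Sum.inl '' U ∪ {w | ∃ i s, w = Sum.inr (i, s) ∧ s ∈ W i} := by
          rw [← ambMap_a a p i s bb]; exact hanch
        have hsW : s ∈ W i := by
          match s, hanch' with
          | [], hanch' =>
            rcases hanch' with h | h
            · obtain ⟨x, hxU, hx⟩ := h
              exact hWnil i (Sum.inl_injective hx ▸ hxU)
            · obtain ⟨i', s', heq, _⟩ := h
              exact absurd heq (by simp [ambAnchor])
          | (m :: s'), hanch' =>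
            rcases hanch' with h | h
            · obtain ⟨x, _, hx⟩ := h
              exact absurd hx (by simp [ambAnchor])
            · obtain ⟨i', s'', heq, hmem⟩ := h
              rw [show ambAnchor a p i (m :: s') = Sum.inr (i, m :: s') from rfl] at heq
              simp only [Sum.inr.injEq, Prod.mk.injEq] at heq
              obtain ⟨rfl, rfl⟩ := heq
              exact hmem
        have hC : gT a s ⁻¹' (W i) ∈ 𝓝 a := by
          have := (presTop_isOpen_iff a (gT a) (W i)).1 (hWopen i) s
          rw [gT_a] at this
          exact this hsW
        refine Filter.mem_of_superset hC ?_
        intro z hz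
        rw [mem_preimage] at hz ⊢
        by_cases hza : z = a
        · rw [hza]
          show ambMap a p i s bb a ∈ _
          rw [ambMap_a]
          exact hanch'
        · rw [gT_ne a s hza] at hz
          show ambMap a p i s bb z ∈ _
          rw [ambMap_ne a p i s bb hza]
          cases bb
          · simp only [if_neg Bool.false_ne_true]
            exact Or.inl ⟨p i (⟨z, hza⟩ :: s), hWsub i hz, rfl⟩
          · simp only [if_pos rfl]
            exact Or.inr ⟨i, ⟨z, hza⟩ :: s, rfl, hz⟩
      · have : ambPres a p (Sum.inr w) ⁻¹'
            (Sum.inl '' U ∪ {w | ∃ i s, w = Sum.inr (i, s) ∧ s ∈ W i}) = univ := by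
          ext z
          simp only [mem_preimage, mem_univ, iff_true]
          exact hanch
        rw [this]
        exact Filter.univ_mem
    · ext x
      simp only [mem_preimage, mem_union, mem_image, mem_setOf_eq]
      constructor
      · rintro (⟨x', hx', hxx⟩ | ⟨i, s, heq, _⟩)
        · exact Sum.inl_injective hxx ▸ hx'
        · exact absurd heq (by simp)
      · intro hx
        exact Or.inl ⟨x, hx, rfl⟩
  · rintro ⟨Uc, hUc, rfl⟩
    rw [hiff]
    intro i
    rw [isOpen_tY_iff]
    intro hnil
    rw [mem_preimage, mem_preimage] at hnil
    set W' : Set (List (Mt a)) :=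
      {s | ambAnchor a p i s ∈ Uc ∧ Sum.inl (p i s) ∈ Uc} with hW'
    have hW'nil : [] ∈ W' := ⟨hnil, hnil⟩
    have hW'open : IsOpen[tT a] W' := by
      rw [tT, presTop_isOpen_iff]
      intro s hs
      rw [gT_a] at hs
      have hPt := (presTop_isOpen_iff a (ambPres a p) Uc).1 hUc (Sum.inl (i, s, true))
      have hPf := (presTop_isOpen_iff a (ambPres a p) Uc).1 hUc (Sum.inl (i, s, false))
      have hanchT : ambPres a p (Sum.inl (i, s, true)) a ∈ Uc := by
        show ambMap a p i s true a ∈ Uc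
        rw [ambMap_a]
        exact hs.1
      have hanchF : ambPres a p (Sum.inl (i, s, false)) a ∈ Uc := by
        show ambMap a p i s false a ∈ Uc
        rw [ambMap_a]
        exact hs.1
      refine Filter.mem_of_superset (Filter.inter_mem (hPt hanchT) (hPf hanchF)) ?_
      rintro z ⟨hzt, hzf⟩
      rw [mem_preimage] at hzt hzf ⊢
      by_cases hza : z = a
      · subst hza
        rw [gT_a]
        exact hs
      · rw [gT_ne a s hza]
        have h1 : ambMap a p i s true z = Sum.inr (i, ⟨z, hza⟩ :: s) := by
          rw [ambMap_ne a p i s true hza, if_pos rfl]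
        have h2 : ambMap a p i s false z = Sum.inl (p i (⟨z, hza⟩ :: s)) := by
          rw [ambMap_ne a p i s false hza, if_neg Bool.false_ne_true]
        have hzt' : ambMap a p i s true z ∈ Uc := hzt
        have hzf' : ambMap a p i s false z ∈ Uc := hzf
        rw [h1] at hzt'
        rw [h2] at hzf'
        exact ⟨hzt', hzf'⟩
    refine Filter.mem_of_superset (isOpen_tT_mem_EY a hW'open hW'nil) ?_
    intro s hsW'
    rw [mem_preimage, mem_preimage]
    exact hsW'.2

theorem chY_to_sch (hA : IsFilterSpace A a) (X : Type u) (tX : TopologicalSpace X)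
    (h : CH (singleClass (List (Mt a)) (tY a)) X tX) :
    SCH (singleClass A tA) X tX := by
  obtain ⟨I, p, hsurj, hiff⟩ := (ch_iff_quotFam (List (Mt a)) (tY a) X tX).1 h
  exact ⟨X ⊕ (I × List (Mt a)), presTop a (ambPres a p), Sum.inl,
    chA_amb a hA p, amb_embedding a p hiff⟩

end Dir1


end Stmt8Aux

/-- for a filter space `A` (with accumulation point `a`) which is not finitely
generated, there is a filter space `Y` of the same cardinality as `A` with
`CH {Y} = SCH {A}`. -/
theorem stmt8 (A : Type u) [tA : TopologicalSpace A] (a : A) (hA : IsFilterSpace A a)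
    (hfg : ¬ AlexandrovDiscrete A) :
    ∃ (Y : Type u) (tY : TopologicalSpace Y) (b : Y), @IsFilterSpace Y tY b ∧
      Cardinal.mk Y = Cardinal.mk A ∧
      ∀ (X : Type u) (tX : TopologicalSpace X),
        CH (singleClass Y tY) X tX ↔ SCH (singleClass A tA) X tX := by
  classical
  refine ⟨List (Stmt8Aux.Mt a), Stmt8Aux.tY a, [], Stmt8Aux.isFilterSpace_Y a hA,
    Stmt8Aux.card_Y a hfg, fun X tX => ?_⟩
  exact ⟨Stmt8Aux.chY_to_sch a hA X tX, Stmt8Aux.sch_to_chY a hA X tX⟩
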